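/- Fix A > 0, a, b, c ∈ ℝ, and define, for T > 0 and v > max(b, c): u(T, v) = (3/2)T + 2a/(T(v − c)) and s(T, v) = a/(T²(v − c)) + ln(v − b) + (3/2) ln(T/A). Then for all such (T, v): ∂u/∂T = T · ∂s/∂T, and ∂u/∂v = T · ∂s/∂v − P(T,v), where P(T, v) = T/(v − b) + a/(T(v − c)²). That is, the first law du = T ds − P dv holds for the Clausius gas. -/

import Mathlib

/-- The first law du = T ds − P dv holds for the Clausius gas with
u = (3/2)T + 2a/(T(v−c)), s = a/(T²(v−c)) + ln(v−b) + (3/2)ln(T/A) and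
P = T/(v−b) + a/(T(v−c)²). -/
theorem stmt_16 (A a b c : ℝ) (hA : 0 < A)
    (u s P : ℝ → ℝ → ℝ)
    (hu : ∀ T v, u T v = (3/2) * T + 2 * a / (T * (v - c)))
    (hs : ∀ T v, s T v = a / (T ^ 2 * (v - c)) + Real.log (v - b) + (3/2) * Real.log (T / A))
    (hP : ∀ T v, P T v = T / (v - b) + a / (T * (v - c) ^ 2)) :
    ∀ T v : ℝ, 0 < T → max b c < v →
      deriv (fun T' => u T' v) T = T * deriv (fun T' => s T' v) T ∧
      deriv (fun v' => u T v') v = T * deriv (fun v' => s T v') v - P T v := by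
  intro T v hT hv
  have hb : b < v := lt_of_le_of_lt (le_max_left _ _) hv
  have hc : c < v := lt_of_le_of_lt (le_max_right _ _) hv
  have hT0 : T ≠ 0 := ne_of_gt hT
  have hvb : v - b ≠ 0 := sub_ne_zero.mpr hb.ne'
  have hvc : v - c ≠ 0 := sub_ne_zero.mpr hc.ne'
  have hA0 : A ≠ 0 := ne_of_gt hA
  constructor
  · have hu' : (fun T' => u T' v) = fun T' => (3/2) * T' + 2 * a / (T' * (v - c)) :=
      funext fun T' => hu T' v
    have hs' : (fun T' => s T' v) = fun T' =>
        a / (T' ^ 2 * (v - c)) + Real.log (v - b) + (3/2) * Real.log (T' / A) :=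
      funext fun T' => hs T' v
    rw [hu', hs']
    have h1 : HasDerivAt (fun T' => (3/2) * T' + 2 * a / (T' * (v - c)))
        ((3/2) * 1 + 2 * a * (-(1 * (v - c)) / (T * (v - c)) ^ 2)) T := by
      have hinv := ((hasDerivAt_id T).mul_const (v - c)).inv (mul_ne_zero hT0 hvc)
      exact (((hasDerivAt_id T).const_mul (3/2)).add (hinv.const_mul (2 * a)))
    have h2 : HasDerivAt (fun T' =>
        a / (T' ^ 2 * (v - c)) + Real.log (v - b) + (3/2) * Real.log (T' / A))
        (a * (-((2 : ℕ) * T ^ 1 * (v - c)) / (T ^ 2 * (v - c)) ^ 2) + 0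
          + (3/2) * ((1 / A) / (T / A))) T := by
      have hpow := ((hasDerivAt_pow 2 T).mul_const (v - c)).inv
        (mul_ne_zero (pow_ne_zero 2 hT0) hvc)
      have hlog := (((hasDerivAt_id T).div_const A).log (div_ne_zero hT0 hA0))
      exact (((hpow.const_mul a).add (hasDerivAt_const T (Real.log (v - b)))).add
          (hlog.const_mul (3/2)))
    rw [h1.deriv, h2.deriv]
    field_simp
    ring
  · have hu' : (fun v' => u T v') = fun v' => (3/2) * T + 2 * a / (T * (v' - c)) :=
      funext fun v' => hu T v'
    have hs' : (fun v' => s T v') = fun v' =>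
        a / (T ^ 2 * (v' - c)) + Real.log (v' - b) + (3/2) * Real.log (T / A) :=
      funext fun v' => hs T v'
    rw [hu', hs', hP]
    have h1 : HasDerivAt (fun v' => (3/2) * T + 2 * a / (T * (v' - c)))
        (0 + 2 * a * (-(T * 1) / (T * (v - c)) ^ 2)) v := by
      have hinv := (((hasDerivAt_id v).sub_const c).const_mul T).inv
        (mul_ne_zero hT0 hvc)
      simpa [div_eq_mul_inv, Pi.add_def] using
        ((hasDerivAt_const v ((3/2) * T)).add (hinv.const_mul (2 * a)))
    have h2 : HasDerivAt (fun v' =>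
        a / (T ^ 2 * (v' - c)) + Real.log (v' - b) + (3/2) * Real.log (T / A))
        (a * (-(T ^ 2 * 1) / (T ^ 2 * (v - c)) ^ 2) + 1 / (v - b) + 0) v := by
      have hinv := (((hasDerivAt_id v).sub_const c).const_mul (T ^ 2)).inv
        (mul_ne_zero (pow_ne_zero 2 hT0) hvc)
      have hlog := ((hasDerivAt_id v).sub_const b).log hvb
      simpa [div_eq_mul_inv, Pi.add_def] using
        (((hinv.const_mul a).add hlog).add (hasDerivAt_const v ((3/2) * Real.log (T / A))))
    rw [h1.deriv, h2.deriv]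
    field_simp
    ring
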